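/- Let x = p/q be a rational number in lowest terms with q ≥ 2 (q > 0). Then there exist integers a, b, c, d with 1 ≤ b, 1 ≤ d, b + d = q, a + c = p, and a·d − b·c = ±1 (so that a/b and c/d are Farey-adjacent and their mediant is p/q). Moreover the unordered pair of rationals {a/b, c/d} determined by such a quadruple is unique: any two quadruples satisfying these conditions yield the same pair of rationals. -/

import Mathlib

private lemma key_rw (p q a b c d : ℤ) (hbd : b + d = q) (hac : a + c = p) :
    a * d - b * c = a * q - b * p := by linear_combination a * hbd - b * hac

private lemma same_sign (p q a b a' b' e : ℤ) (hq : 2 ≤ q) (hcop : IsCoprime p q)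
    (hb1 : 1 ≤ b) (hb2 : b ≤ q - 1) (hb1' : 1 ≤ b') (hb2' : b' ≤ q - 1)
    (h : a * q - b * p = e) (h' : a' * q - b' * p = e) : a = a' ∧ b = b' := by
  have hdvd : q ∣ (b - b') * p := ⟨a - a', by linear_combination h' - h⟩
  have hbb : b - b' = 0 := by
    refine Int.eq_zero_of_abs_lt_dvd (hcop.symm.dvd_of_dvd_mul_right hdvd) ?_
    rw [abs_lt]; omega
  have hb : b = b' := by omega
  have : a * q = a' * q := by linear_combination h - h' + p * hb
  exact ⟨mul_right_cancel₀ (by omega) this, hb⟩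

private lemma opp_sign (p q a b a' b' e : ℤ) (hq : 2 ≤ q) (hcop : IsCoprime p q)
    (hb1 : 1 ≤ b) (hb2 : b ≤ q - 1) (hb1' : 1 ≤ b') (hb2' : b' ≤ q - 1)
    (h : a * q - b * p = e) (h' : a' * q - b' * p = -e) : a + a' = p ∧ b + b' = q := by
  have hdvd : q ∣ (b + b') * p := ⟨a + a', by linear_combination - h - h'⟩
  obtain ⟨k, hk⟩ := hcop.symm.dvd_of_dvd_mul_right hdvd
  have hk1 : 1 ≤ k := by nlinarith
  have hk2 : k < 2 := by nlinarith
  have hk' : k = 1 := by omega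
  rw [hk', mul_one] at hk
  have hbq : b + b' = q := hk
  refine ⟨?_, hbq⟩
  have : (a + a') * q = p * q := by linear_combination h + h' + p * hbq
  exact mul_right_cancel₀ (by omega) this

theorem stmt2 (x : ℚ) (hx : 2 ≤ x.den) :
    (∃ a b c d : ℤ, 1 ≤ b ∧ 1 ≤ d ∧ b + d = (x.den : ℤ) ∧ a + c = x.num ∧
        (a * d - b * c = 1 ∨ a * d - b * c = -1)) ∧
      ∀ a b c d a' b' c' d' : ℤ,
        1 ≤ b → 1 ≤ d → b + d = (x.den : ℤ) → a + c = x.num →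
          (a * d - b * c = 1 ∨ a * d - b * c = -1) →
        1 ≤ b' → 1 ≤ d' → b' + d' = (x.den : ℤ) → a' + c' = x.num →
          (a' * d' - b' * c' = 1 ∨ a' * d' - b' * c' = -1) →
        ({(a : ℚ) / (b : ℚ), (c : ℚ) / (d : ℚ)} : Set ℚ) =
          {(a' : ℚ) / (b' : ℚ), (c' : ℚ) / (d' : ℚ)} := by
  set p : ℤ := x.num with hp
  set q : ℤ := (x.den : ℤ) with hqdef
  have hq : 2 ≤ q := by rw [hqdef]; exact_mod_cast hx
  have hq0 : q ≠ 0 := by omega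
  have hcop : IsCoprime p q := by
    rw [Int.isCoprime_iff_gcd_eq_one]
    simpa [Int.gcd, hp, hqdef, Nat.Coprime] using x.reduced
  constructor
  · obtain ⟨u, v, huv⟩ := hcop
    set b : ℤ := (-u) % q with hbdef
    have hb0 : 0 ≤ b := Int.emod_nonneg _ hq0
    have hbq : b < q := Int.emod_lt_of_pos _ (by omega)
    have hbeq : b = -u - q * ((-u) / q) := by
      rw [hbdef, Int.emod_def]
    have hdvd : q ∣ b * p + 1 := ⟨v - ((-u) / q) * p, by linear_combination p * hbeq - huv⟩
    set a : ℤ := (b * p + 1) / q with hadef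
    have ha : a * q = b * p + 1 := Int.ediv_mul_cancel hdvd
    have hbne : b ≠ 0 := by
      intro h
      have h1 : q ∣ 1 := ⟨a, by linear_combination - ha - p * h⟩
      have := Int.le_of_dvd one_pos h1
      omega
    refine ⟨a, b, p - a, q - b, by omega, by omega, by ring, by ring, Or.inl ?_⟩
    linear_combination ha
  · intro a b c d a' b' c' d' hb hd hbd hac he hb' hd' hbd' hac' he'
    have hbub : b ≤ q - 1 := by omega
    have hbub' : b' ≤ q - 1 := by omega
    rw [key_rw p q a b c d hbd hac] at he
    rw [key_rw p q a' b' c' d' hbd' hac'] at he'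
    have hd_eq : d = q - b := by omega
    have hd_eq' : d' = q - b' := by omega
    have hc_eq : c = p - a := by omega
    have hc_eq' : c' = p - a' := by omega
    rcases he with h | h <;> rcases he' with h' | h'
    · obtain ⟨ha, hb⟩ := same_sign p q a b a' b' 1 hq hcop hb hbub hb' hbub' h h'
      have : a' = a ∧ b' = b ∧ c' = c ∧ d' = d := by omega
      obtain ⟨e1, e2, e3, e4⟩ := this
      rw [e1, e2, e3, e4]
    · obtain ⟨ha, hb⟩ := opp_sign p q a b a' b' 1 hq hcop hb hbub hb' hbub' h h'
      have : a' = c ∧ b' = d ∧ c' = a ∧ d' = b := by omega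
      obtain ⟨e1, e2, e3, e4⟩ := this
      rw [e1, e2, e3, e4, Set.pair_comm]
    · obtain ⟨ha, hb⟩ := opp_sign p q a b a' b' (-1) hq hcop hb hbub hb' hbub' h (by omega)
      have : a' = c ∧ b' = d ∧ c' = a ∧ d' = b := by omega
      obtain ⟨e1, e2, e3, e4⟩ := this
      rw [e1, e2, e3, e4, Set.pair_comm]
    · obtain ⟨ha, hb⟩ := same_sign p q a b a' b' (-1) hq hcop hb hbub hb' hbub' h h'
      have : a' = a ∧ b' = b ∧ c' = c ∧ d' = d := by omega
      obtain ⟨e1, e2, e3, e4⟩ := this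
      rw [e1, e2, e3, e4]
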